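/- Let k : M → L be a compactification of a frame L, with ⊲ₖ and the class Cₖ as defined. Then: (i) for every compact regular frame L' and every frame homomorphism f : L' → L belonging to Cₖ, there exists a unique frame homomorphism g : L' → M with f = k ∘ g; (ii) k is the minimal compactification with this extension property: if k' : M' → L is another compactification such that every f : L' → L in Cₖ factors as f = k' ∘ g' for some frame homomorphism g' : L' → M', then there exists a frame homomorphism h : M → M' with k = k' ∘ h. -/

import Mathlib

/-- The well-inside relation of a frame: `b` is well inside `a` iff `bᶜ ⊔ a = ⊤`. -/
def WellInside {L : Type*} [Order.Frame L] (b a : L) : Prop := bᶜ ⊔ a = ⊤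

/-- A frame is regular if every element is the join of the elements well inside it. -/
def IsRegularFrame (L : Type*) [Order.Frame L] : Prop :=
  ∀ a : L, a = sSup {b | WellInside b a}

/-- A frame is compact if `⊤` is a compact element. -/
def IsCompactFrame (L : Type*) [Order.Frame L] : Prop :=
  ∀ S : Set L, ⊤ ≤ sSup S → ∃ T : Set L, T ⊆ S ∧ T.Finite ∧ ⊤ ≤ sSup T

/-- A relation on `P` is closed under conditions (1)–(5) of a strong inclusion. -/
def ClosedUnder15 {L : Type*} [Order.Frame L] (P : Set L) (r : L → L → Prop) : Prop :=
  (r ⊥ ⊥ ∧ r ⊤ ⊤) ∧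
  (∀ x a b y, x ∈ P → y ∈ P → x ≤ a → r a b → b ≤ y → r x y) ∧
  (∀ x a b, r x a → r x b → r x (a ⊓ b)) ∧
  (∀ x y a, r x a → r y a → r (x ⊔ y) a) ∧
  (∀ a b, r a b → r bᶜ aᶜ)

/-- The smallest relation containing `R` and closed under conditions (1)–(5) of a
strong inclusion on `P`: the intersection of all such relations. -/
def leastClosed15 {L : Type*} [Order.Frame L] (P : Set L) (R : L → L → Prop) :
    L → L → Prop :=
  fun x y => ∀ r : L → L → Prop, (∀ a b, R a b → r a b) → ClosedUnder15 P r → r x y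

/-- The strong inclusion associated with a compactification `k : M → L`. -/
def kIncl {M L : Type*} [Order.Frame M] [Order.Frame L] (k : FrameHom M L) :
    L → L → Prop :=
  leastClosed15 Set.univ
    (fun x y => ∃ a b : M, WellInside b a ∧ x = k b ∧ y = k a)

/-- The relation `r` on `L` is finer than the frame homomorphism `f : L' → L`. -/
def Finer {L' L : Type*} [Order.Frame L'] [Order.Frame L]
    (r : L → L → Prop) (f : FrameHom L' L) : Prop :=
  ∀ x y : L', WellInside y x → ∃ p p' : L, f y ≤ p ∧ r p p' ∧ p' ≤ f x

section Aux

variable {α : Type*} [Order.Frame α]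

lemma wi_le {b a : α} (h : WellInside b a) : b ≤ a := by
  have h2 : b ⊓ (bᶜ ⊔ a) = b := by rw [h, inf_top_eq]
  rw [inf_sup_left] at h2
  calc b = b ⊓ bᶜ ⊔ b ⊓ a := h2.symm
    _ ≤ ⊥ ⊔ a := sup_le_sup (inf_compl_self b).le inf_le_right
    _ = a := bot_sup_eq a

lemma compl_le_of_sup_top {u v : α} (h : u ⊔ v = ⊤) : uᶜ ≤ v := by
  have h2 : uᶜ ⊓ (u ⊔ v) = uᶜ := by rw [h, inf_top_eq]
  rw [inf_sup_left] at h2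
  calc uᶜ = uᶜ ⊓ u ⊔ uᶜ ⊓ v := h2.symm
    _ ≤ ⊥ ⊔ v := sup_le_sup (by rw [inf_comm]; exact (inf_compl_self u).le) inf_le_right
    _ = v := bot_sup_eq v

lemma wi_mono {b' b a a' : α} (hb : b' ≤ b) (h : WellInside b a) (ha : a ≤ a') :
    WellInside b' a' :=
  top_le_iff.1 (h.ge.trans (sup_le_sup (compl_le_compl hb) ha))

lemma wi_bot {a : α} : WellInside (⊥ : α) a := by
  simp [WellInside]

lemma wi_top {a : α} : WellInside a (⊤ : α) := by
  simp [WellInside]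

lemma wi_bot_eq {y : α} (h : WellInside y (⊥ : α)) : y = ⊥ :=
  le_bot_iff.1 (wi_le h)

lemma wi_inf {b a b' a' : α} (h : WellInside b a) (h' : WellInside b' a') :
    WellInside (b ⊓ b') (a ⊓ a') := by
  have h1 : (bᶜ ⊔ b'ᶜ) ⊔ (a ⊓ a') = ⊤ := by
    rw [sup_inf_left]
    have e1 : bᶜ ⊔ b'ᶜ ⊔ a = ⊤ := top_le_iff.1 (by
      rw [sup_right_comm]; exact h.ge.trans le_sup_left)
    have e2 : bᶜ ⊔ b'ᶜ ⊔ a' = ⊤ := top_le_iff.1 (by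
      rw [sup_assoc]; exact h'.ge.trans le_sup_right)
    rw [e1, e2, inf_top_eq]
  exact top_le_iff.1 (h1.ge.trans (sup_le_sup_right
    (sup_le (compl_le_compl inf_le_left) (compl_le_compl inf_le_right)) _))

lemma wi_sup {b a b' a' : α} (h : WellInside b a) (h' : WellInside b' a') :
    WellInside (b ⊔ b') (a ⊔ a') := by
  unfold WellInside at *
  rw [compl_sup, sup_inf_right]
  have e1 : bᶜ ⊔ (a ⊔ a') = ⊤ := top_le_iff.1 (by rw [← sup_assoc]; exact h.ge.trans le_sup_left)
  have e2 : b'ᶜ ⊔ (a ⊔ a') = ⊤ := top_le_iff.1 (by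
    rw [sup_comm a a', ← sup_assoc]; exact h'.ge.trans le_sup_left)
  rw [e1, e2, inf_top_eq]

lemma wi_sup' {b b' a : α} (h : WellInside b a) (h' : WellInside b' a) :
    WellInside (b ⊔ b') a := by
  have := wi_sup h h'
  rwa [sup_idem] at this

lemma wi_ccompl {u v : α} (h : WellInside u v) : WellInside uᶜᶜ v := by
  unfold WellInside at *
  rwa [compl_compl_compl]

lemma compact_extract (hc : IsCompactFrame α) {y : α} {D : Set α}
    (h : ⊤ ≤ yᶜ ⊔ sSup D) : ∃ F, F ⊆ D ∧ F.Finite ∧ ⊤ ≤ yᶜ ⊔ sSup F := by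
  obtain ⟨T, hTsub, hTfin, hTtop⟩ := hc (insert yᶜ D) (by rwa [sSup_insert])
  refine ⟨T \ {yᶜ}, ?_, hTfin.subset Set.diff_subset, ?_⟩
  · intro t ht
    rcases hTsub ht.1 with h1 | h2
    · exact absurd h1 ht.2
    · exact h2
  · refine hTtop.trans (sSup_le fun t ht => ?_)
    by_cases hty : t = yᶜ
    · exact hty.le.trans le_sup_left
    · exact (le_sSup (show t ∈ T \ {yᶜ} from ⟨ht, by simpa using hty⟩)).trans le_sup_right

lemma wi_sSup_finite {F : Set α} {a : α} (hF : F.Finite) (h : ∀ d ∈ F, WellInside d a) :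
    WellInside (sSup F) a := by
  refine Set.Finite.induction_on
    (motive := fun G _ => (∀ d ∈ G, WellInside d a) → WellInside (sSup G) a) _ hF
    (fun _ => by simpa using (wi_bot : WellInside (⊥ : α) a)) ?_ h
  intro e G _ _ ih hmem
  rw [sSup_insert]
  exact wi_sup' (hmem _ (Set.mem_insert _ _)) (ih fun d hd => hmem d (Set.mem_insert_of_mem _ hd))

lemma wi_interp (hc : IsCompactFrame α) (hr : IsRegularFrame α) {b a : α}
    (h : WellInside b a) : ∃ c, WellInside b c ∧ WellInside c a := by
  have htop : ⊤ ≤ bᶜ ⊔ sSup {c | WellInside c a} := by rw [← hr a]; exact h.ge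
  obtain ⟨F, hFD, hFfin, hFtop⟩ := compact_extract hc htop
  exact ⟨sSup F, top_le_iff.1 hFtop, wi_sSup_finite hFfin fun d hd => hFD hd⟩

lemma wi_split (hc : IsCompactFrame α) (hr : IsRegularFrame α) {y x₁ x₂ : α}
    (h : WellInside y (x₁ ⊔ x₂)) :
    ∃ y₁ y₂, WellInside y₁ x₁ ∧ WellInside y₂ x₂ ∧ y ≤ y₁ ⊔ y₂ := by
  set D : Set α := {w | ∃ u v, WellInside u x₁ ∧ WellInside v x₂ ∧ w = u ⊔ v} with hD
  have hx1 : x₁ ≤ sSup D := by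
    calc x₁ = sSup {u | WellInside u x₁} := hr x₁
      _ ≤ sSup D := sSup_le fun u hu => le_sSup ⟨u, ⊥, hu, wi_bot, (sup_bot_eq u).symm⟩
  have hx2 : x₂ ≤ sSup D := by
    calc x₂ = sSup {v | WellInside v x₂} := hr x₂
      _ ≤ sSup D := sSup_le fun v hv => le_sSup ⟨⊥, v, wi_bot, hv, (bot_sup_eq v).symm⟩
  have htop : ⊤ ≤ yᶜ ⊔ sSup D := h.ge.trans (sup_le_sup_left (sup_le hx1 hx2) _)
  obtain ⟨F, hFD, hFfin, hFtop⟩ := compact_extract hc htop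
  have key : ∀ G : Set α, G.Finite → G ⊆ D →
      ∃ y₁ y₂, WellInside y₁ x₁ ∧ WellInside y₂ x₂ ∧ sSup G ≤ y₁ ⊔ y₂ := by
    intro G hG
    refine Set.Finite.induction_on
      (motive := fun G _ => G ⊆ D → ∃ y₁ y₂, WellInside y₁ x₁ ∧ WellInside y₂ x₂ ∧ sSup G ≤ y₁ ⊔ y₂)
      _ hG (fun _ => ⟨⊥, ⊥, wi_bot, wi_bot, by simp⟩) ?_
    intro w G _ _ ih hsub
    obtain ⟨y₁, y₂, h1, h2, h3⟩ := ih fun t ht => hsub (Set.mem_insert_of_mem _ ht)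
    obtain ⟨u, v, hu, hv, huv⟩ := hsub (Set.mem_insert _ _)
    refine ⟨u ⊔ y₁, v ⊔ y₂, wi_sup' hu h1, wi_sup' hv h2, ?_⟩
    rw [sSup_insert, huv]
    calc u ⊔ v ⊔ sSup G ≤ u ⊔ v ⊔ (y₁ ⊔ y₂) := sup_le_sup_left h3 _
      _ = u ⊔ y₁ ⊔ (v ⊔ y₂) := by rw [sup_assoc, sup_assoc, sup_left_comm v]
  obtain ⟨y₁, y₂, h1, h2, h3⟩ := key F hFfin hFD
  refine ⟨y₁, y₂, h1, h2, ?_⟩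
  have : y ≤ y ⊓ (yᶜ ⊔ sSup F) := le_inf le_rfl (le_top.trans hFtop)
  rw [inf_sup_left] at this
  calc y ≤ y ⊓ yᶜ ⊔ y ⊓ sSup F := this
    _ ≤ ⊥ ⊔ (y₁ ⊔ y₂) := sup_le_sup ((inf_compl_self y).le) (inf_le_right.trans h3)
    _ = y₁ ⊔ y₂ := bot_sup_eq _

end Aux

section KSection

variable {M L : Type*} [Order.Frame M] [Order.Frame L] (k : FrameHom M L)

/-- Concrete description of the strong inclusion associated with `k`. -/
def r0 (p q : L) : Prop := ∃ a b : M, WellInside b a ∧ p ≤ k b ∧ k a ≤ q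

variable {k}

lemma dense_le_ccompl (hd : ∀ a : M, k a = ⊥ → a = ⊥) {a m : M} (h : k a ≤ k m) :
    a ≤ mᶜᶜ := by
  have hb : k (a ⊓ mᶜ) = ⊥ := by
    rw [map_inf]
    refine le_bot_iff.1 ?_
    calc k a ⊓ k mᶜ ≤ k m ⊓ k mᶜ := inf_le_inf_right _ h
      _ = k (m ⊓ mᶜ) := (map_inf k m mᶜ).symm
      _ = ⊥ := by rw [inf_compl_self, map_bot]
  exact le_compl_iff_disjoint_right.2 (disjoint_iff.2 (hd _ hb))

lemma compl_k_le (b : M) : k bᶜ ≤ (k b)ᶜ := by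
  rw [le_compl_iff_disjoint_right, disjoint_iff, ← map_inf]
  rw [inf_comm, inf_compl_self, map_bot]

lemma k_compl_le (hd : ∀ a : M, k a = ⊥ → a = ⊥) (hs : Function.Surjective k) (a : M) :
    (k a)ᶜ ≤ k aᶜ := by
  obtain ⟨c, hc⟩ := hs ((k a)ᶜ)
  have hcb : k (c ⊓ a) = ⊥ := by
    rw [map_inf, hc, inf_comm, inf_compl_self]
  have hca : c ≤ aᶜ := le_compl_iff_disjoint_right.2 (disjoint_iff.2 (hd _ hcb))
  calc (k a)ᶜ = k c := hc.symm
    _ ≤ k aᶜ := OrderHomClass.mono k hca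

lemma r0_closed (hd : ∀ a : M, k a = ⊥ → a = ⊥) (hs : Function.Surjective k) :
    ClosedUnder15 Set.univ (r0 k) := by
  refine ⟨⟨⟨⊥, ⊥, wi_bot, by simp, by simp⟩, ⟨⊤, ⊤, wi_top, by simp, by simp⟩⟩,
    ?_, ?_, ?_, ?_⟩
  · rintro x a b y - - hxa ⟨A, B, hBA, h1, h2⟩ hby
    exact ⟨A, B, hBA, hxa.trans h1, h2.trans hby⟩
  · rintro x a b ⟨A, B, hBA, h1, h2⟩ ⟨A', B', hBA', h1', h2'⟩
    refine ⟨A ⊓ A', B ⊓ B', wi_inf hBA hBA', ?_, ?_⟩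
    · rw [map_inf]; exact le_inf h1 h1'
    · rw [map_inf]; exact inf_le_inf h2 h2'
  · rintro x y a ⟨A, B, hBA, h1, h2⟩ ⟨A', B', hBA', h1', h2'⟩
    refine ⟨A ⊔ A', B ⊔ B', wi_sup hBA hBA', ?_, ?_⟩
    · rw [map_sup]; exact sup_le (h1.trans le_sup_left) (h1'.trans le_sup_right)
    · rw [map_sup]; exact sup_le h2 h2'
  · rintro p q ⟨A, B, hBA, h1, h2⟩
    refine ⟨Bᶜ, Aᶜ, ?_, ?_, ?_⟩
    · refine top_le_iff.1 ?_
      calc (⊤ : M) = Bᶜ ⊔ A := hBA.symm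
        _ ≤ Bᶜ ⊔ Aᶜᶜ := sup_le_sup_left le_compl_compl _
        _ = Aᶜᶜ ⊔ Bᶜ := sup_comm _ _
    · exact (compl_le_compl h2).trans (k_compl_le hd hs A)
    · exact (compl_k_le B).trans (compl_le_compl h1)

lemma kIncl_le_r0 (hd : ∀ a : M, k a = ⊥ → a = ⊥) (hs : Function.Surjective k)
    {p q : L} (h : kIncl k p q) : r0 k p q := by
  refine h (r0 k) ?_ (r0_closed hd hs)
  rintro x y ⟨a, b, hba, rfl, rfl⟩
  exact ⟨a, b, hba, le_rfl, le_rfl⟩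

end KSection

section Main

variable {M L L' : Type*} [Order.Frame M] [Order.Frame L] [Order.Frame L']
variable (k : FrameHom M L) (f : FrameHom L' L)

/-- Auxiliary "strongly regular ideal" trace of `f` below `x`. -/
def Gset (x : L') : Set L :=
  {p | ∃ y, WellInside y x ∧ ∃ a b : M, WellInside b a ∧ p ≤ k b ∧ k a ≤ f y}

/-- The set of elements of `M` well inside an element whose image lies in `Gset`. -/
def Sset (x : L') : Set M := {b | ∃ c, WellInside b c ∧ k c ∈ Gset k f x}

/-- The underlying function of the lift of `f` through `k`. -/
def gfun (x : L') : M := sSup (Sset k f x)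

variable {k f}

lemma finer_unfold (hd : ∀ a : M, k a = ⊥ → a = ⊥) (hs : Function.Surjective k)
    (hf : Finer (kIncl k) f) {x y : L'} (h : WellInside y x) :
    ∃ a b : M, WellInside b a ∧ f y ≤ k b ∧ k a ≤ f x := by
  obtain ⟨p, p', h1, h2, h3⟩ := hf x y h
  obtain ⟨a, b, hba, hpb, hap⟩ := kIncl_le_r0 hd hs h2
  exact ⟨a, b, hba, h1.trans hpb, hap.trans h3⟩

lemma Sset_mono {x x' : L'} (h : x ≤ x') : Sset k f x ⊆ Sset k f x' := by
  rintro b ⟨c, hbc, y, hyx, a₀, b₀, h1, h2, h3⟩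
  exact ⟨c, hbc, y, wi_mono le_rfl hyx h, a₀, b₀, h1, h2, h3⟩

lemma gfun_mono {x x' : L'} (h : x ≤ x') : gfun k f x ≤ gfun k f x' :=
  sSup_le_sSup (Sset_mono h)

lemma gfun_top : gfun k f ⊤ = ⊤ := by
  refine le_antisymm le_top (le_sSup ?_)
  exact ⟨⊤, wi_top, ⊤, wi_top, ⊤, ⊤, wi_top, le_rfl, by simp⟩

lemma gfun_bot_le (hd : ∀ a : M, k a = ⊥ → a = ⊥) : gfun k f ⊥ ≤ ⊥ := by
  apply sSup_le
  rintro b ⟨c, hbc, y, hyx, a₀, b₀, h1, h2, h3⟩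
  have hy : y = ⊥ := wi_bot_eq hyx
  have ha₀ : a₀ = ⊥ := hd _ (le_bot_iff.1 (by rw [← map_bot f, ← hy]; exact h3))
  have hb₀ : b₀ = ⊥ := le_bot_iff.1 (ha₀ ▸ wi_le h1)
  have hc : c = ⊥ := hd _ (le_bot_iff.1 (by rw [← map_bot k, ← hb₀]; exact h2))
  exact le_bot_iff.2 (le_bot_iff.1 (hc ▸ wi_le hbc))

lemma k_gfun (hMc : IsCompactFrame M) (hMr : IsRegularFrame M)
    (hLc : IsCompactFrame L') (hLr : IsRegularFrame L')
    (hf' : ∀ {x y : L'}, WellInside y x → ∃ a b : M, WellInside b a ∧ f y ≤ k b ∧ k a ≤ f x)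
    (x : L') : k (gfun k f x) = f x := by
  apply le_antisymm
  · rw [gfun, map_sSup]
    apply sSup_le
    rintro p ⟨b, ⟨c, hbc, y, hyx, a₀, b₀, h1, h2, h3⟩, rfl⟩
    calc k b ≤ k c := OrderHomClass.mono k (wi_le hbc)
      _ ≤ k b₀ := h2
      _ ≤ k a₀ := OrderHomClass.mono k (wi_le h1)
      _ ≤ f y := h3
      _ ≤ f x := OrderHomClass.mono f (wi_le hyx)
  · have hfx : f x = sSup (f '' {y | WellInside y x}) := by
      conv_lhs => rw [hLr x]
      exact map_sSup f _
    rw [hfx]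
    apply sSup_le
    rintro p ⟨y, hyx, rfl⟩
    obtain ⟨z, hyz, hzx⟩ := wi_interp hLc hLr hyx
    obtain ⟨a₀, b₀, hb₀a₀, hfy, hka₀⟩ := hf' hyz
    obtain ⟨c₀, hbc₀, hc₀a₀⟩ := wi_interp hMc hMr hb₀a₀
    have hmem : b₀ ∈ Sset k f x := ⟨c₀, hbc₀, z, hzx, a₀, c₀, hc₀a₀, le_rfl, hka₀⟩
    exact hfy.trans (OrderHomClass.mono k (le_sSup hmem))

lemma gfun_inf (x x' : L') : gfun k f (x ⊓ x') = gfun k f x ⊓ gfun k f x' := by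
  apply le_antisymm
  · exact le_inf (gfun_mono inf_le_left) (gfun_mono inf_le_right)
  · rw [gfun, gfun, gfun, sSup_inf_sSup]
    apply iSup₂_le
    rintro ⟨b, b'⟩ hmem
    obtain ⟨c, hbc, y, hyx, a₀, b₀, h1, h2, h3⟩ := hmem.1
    obtain ⟨c', hbc', y', hyx', a₀', b₀', h1', h2', h3'⟩ := hmem.2
    have hm : b ⊓ b' ∈ Sset k f (x ⊓ x') := by
      refine ⟨c ⊓ c', wi_inf hbc hbc', y ⊓ y', wi_inf hyx hyx',
        a₀ ⊓ a₀', b₀ ⊓ b₀', wi_inf h1 h1', ?_, ?_⟩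
      · rw [map_inf, map_inf]; exact inf_le_inf h2 h2'
      · rw [map_inf, map_inf]; exact inf_le_inf h3 h3'
    exact le_sSup hm

lemma gfun_sup (hMc : IsCompactFrame M) (hMr : IsRegularFrame M)
    (hd : ∀ a : M, k a = ⊥ → a = ⊥)
    (hLc : IsCompactFrame L') (hLr : IsRegularFrame L')
    (hf' : ∀ {x y : L'}, WellInside y x → ∃ a b : M, WellInside b a ∧ f y ≤ k b ∧ k a ≤ f x)
    (x₁ x₂ : L') : gfun k f (x₁ ⊔ x₂) ≤ gfun k f x₁ ⊔ gfun k f x₂ := by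
  apply sSup_le
  rintro b ⟨c, hbc, y, hyx, a₀, b₀, h1, h2, h3⟩
  -- split y below x₁ ⊔ x₂ in L'
  obtain ⟨y₁, y₂, hy₁, hy₂, hyle⟩ := wi_split hLc hLr hyx
  -- interpolate in L'
  obtain ⟨z₁, hy₁z₁, hz₁x₁⟩ := wi_interp hLc hLr hy₁
  obtain ⟨z₂, hy₂z₂, hz₂x₂⟩ := wi_interp hLc hLr hy₂
  -- apply the Finer condition
  obtain ⟨a₁, b₁, hb₁a₁, hfy₁, hka₁⟩ := hf' hy₁z₁
  obtain ⟨a₂, b₂, hb₂a₂, hfy₂, hka₂⟩ := hf' hy₂z₂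
  -- k a₀ ≤ k (b₁ ⊔ b₂)
  have hka₀ : k a₀ ≤ k (b₁ ⊔ b₂) := by
    rw [map_sup]
    calc k a₀ ≤ f y := h3
      _ ≤ f (y₁ ⊔ y₂) := OrderHomClass.mono f hyle
      _ = f y₁ ⊔ f y₂ := map_sup f y₁ y₂
      _ ≤ k b₁ ⊔ k b₂ := sup_le_sup hfy₁ hfy₂
  have ha₀ : a₀ ≤ (b₁ ⊔ b₂)ᶜᶜ := dense_le_ccompl hd hka₀
  -- b is well inside a₁ ⊔ a₂
  have hb : b ≤ (b₁ ⊔ b₂)ᶜᶜ :=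
    (wi_le hbc).trans ((dense_le_ccompl hd h2).trans ((wi_le (wi_ccompl h1)).trans ha₀))
  have hwi : WellInside b (a₁ ⊔ a₂) :=
    wi_mono hb (wi_ccompl (wi_sup hb₁a₁ hb₂a₂)) le_rfl
  -- split b below a₁ ⊔ a₂ in M
  obtain ⟨c₁, c₂, hc₁, hc₂, hble⟩ := wi_split hMc hMr hwi
  -- interpolate in M
  obtain ⟨d₁, hc₁d₁, hd₁a₁⟩ := wi_interp hMc hMr hc₁
  obtain ⟨d₂, hc₂d₂, hd₂a₂⟩ := wi_interp hMc hMr hc₂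
  have hm₁ : c₁ ∈ Sset k f x₁ :=
    ⟨d₁, hc₁d₁, z₁, hz₁x₁, a₁, d₁, hd₁a₁, le_rfl, hka₁⟩
  have hm₂ : c₂ ∈ Sset k f x₂ :=
    ⟨d₂, hc₂d₂, z₂, hz₂x₂, a₂, d₂, hd₂a₂, le_rfl, hka₂⟩
  exact hble.trans (sup_le_sup (le_sSup hm₁) (le_sSup hm₂))

lemma gfun_sSup (hMc : IsCompactFrame M) (hMr : IsRegularFrame M)
    (hd : ∀ a : M, k a = ⊥ → a = ⊥)
    (hLc : IsCompactFrame L') (hLr : IsRegularFrame L')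
    (hf' : ∀ {x y : L'}, WellInside y x → ∃ a b : M, WellInside b a ∧ f y ≤ k b ∧ k a ≤ f x)
    (T : Set L') : gfun k f (sSup T) = sSup (gfun k f '' T) := by
  apply le_antisymm
  · apply sSup_le
    rintro b ⟨c, hbc, y, hyx, a₀, b₀, h1, h2, h3⟩
    obtain ⟨F, hFT, hFfin, hFtop⟩ := compact_extract hLc hyx.ge
    have hbF : b ∈ Sset k f (sSup F) :=
      ⟨c, hbc, y, top_le_iff.1 hFtop, a₀, b₀, h1, h2, h3⟩
    have key : ∀ G : Set L', G.Finite → G ⊆ T →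
        gfun k f (sSup G) ≤ sSup (gfun k f '' T) := by
      intro G hG
      refine Set.Finite.induction_on
        (motive := fun G _ => G ⊆ T → gfun k f (sSup G) ≤ sSup (gfun k f '' T)) _ hG ?_ ?_
      · intro _
        rw [sSup_empty]
        exact (gfun_bot_le hd).trans bot_le
      · intro w G _ _ ih hsub
        rw [sSup_insert]
        calc gfun k f (w ⊔ sSup G) ≤ gfun k f w ⊔ gfun k f (sSup G) :=
              gfun_sup hMc hMr hd hLc hLr hf' w (sSup G)
          _ ≤ sSup (gfun k f '' T) ⊔ sSup (gfun k f '' T) :=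
              sup_le_sup (le_sSup ⟨w, hsub (Set.mem_insert _ _), rfl⟩)
                (ih fun t ht => hsub (Set.mem_insert_of_mem _ ht))
          _ = sSup (gfun k f '' T) := sup_idem _
    exact (le_sSup hbF).trans (key F hFfin hFT)
  · apply sSup_le
    rintro p ⟨x, hxT, rfl⟩
    exact gfun_mono (le_sSup hxT)

end Main

section Assemble

variable {M L L' : Type*} [Order.Frame M] [Order.Frame L] [Order.Frame L']

/-- The lift of `f` through `k` as a frame homomorphism. -/
def gHom (k : FrameHom M L) (f : FrameHom L' L)
    (hMc : IsCompactFrame M) (hMr : IsRegularFrame M)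
    (hd : ∀ a : M, k a = ⊥ → a = ⊥)
    (hLc : IsCompactFrame L') (hLr : IsRegularFrame L')
    (hf' : ∀ {x y : L'}, WellInside y x → ∃ a b : M, WellInside b a ∧ f y ≤ k b ∧ k a ≤ f x) :
    FrameHom L' M :=
  ⟨⟨⟨gfun k f, fun a b => gfun_inf a b⟩, gfun_top⟩,
    fun T => gfun_sSup hMc hMr hd hLc hLr hf' T⟩

lemma lift_le (k : FrameHom M L) (hd : ∀ a : M, k a = ⊥ → a = ⊥) (hLr : IsRegularFrame L')
    (g₁ g₂ : FrameHom L' M) (h : ∀ y, k (g₁ y) = k (g₂ y)) (x : L') : g₁ x ≤ g₂ x := by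
  have hx : g₁ x = sSup (g₁ '' {y | WellInside y x}) := by
    conv_lhs => rw [hLr x]
    exact map_sSup g₁ _
  rw [hx]
  apply sSup_le
  rintro p ⟨y, hyx, rfl⟩
  have hb : k (g₁ y ⊓ g₂ yᶜ) = ⊥ := by
    rw [map_inf, h y, ← map_inf, ← map_inf, inf_compl_self, map_bot, map_bot]
  have h1 : g₁ y ≤ (g₂ yᶜ)ᶜ := le_compl_iff_disjoint_right.2 (disjoint_iff.2 (hd _ hb))
  have h2 : g₂ yᶜ ⊔ g₂ x = ⊤ := by rw [← map_sup, show yᶜ ⊔ x = ⊤ from hyx, map_top]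
  exact h1.trans (compl_le_of_sup_top h2)

lemma lift_unique (k : FrameHom M L) (hd : ∀ a : M, k a = ⊥ → a = ⊥)
    (hLr : IsRegularFrame L') (g₁ g₂ : FrameHom L' M)
    (h : ∀ y, k (g₁ y) = k (g₂ y)) : g₁ = g₂ := by
  refine DFunLike.ext _ _ fun x => le_antisymm ?_ ?_
  · exact lift_le k hd hLr g₁ g₂ h x
  · exact lift_le k hd hLr g₂ g₁ (fun y => (h y).symm) x

end Assemble


/-- Corollary 4.15 of the paper: a compactification `k : M → L` extends uniquely
every frame homomorphism in its associated class `Cₖ`, and it is the minimal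
compactification with this extension property. -/
theorem compactification_extension_characterization
    {L M : Type u} [Order.Frame L] [Order.Frame M]
    (hMc : IsCompactFrame M) (hMr : IsRegularFrame M)
    (k : FrameHom M L) (hdense : ∀ a : M, k a = ⊥ → a = ⊥)
    (hsurj : Function.Surjective k) :
    (∀ (L' : Type u) (_ : Order.Frame L'),
      IsCompactFrame L' → IsRegularFrame L' →
      ∀ f : FrameHom L' L, Finer (kIncl k) f →
        ∃! g : FrameHom L' M, f = k.comp g) ∧
    (∀ (M' : Type u) (_ : Order.Frame M'),
      IsCompactFrame M' → IsRegularFrame M' →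
      ∀ k' : FrameHom M' L, (∀ a : M', k' a = ⊥ → a = ⊥) →
        Function.Surjective k' →
        (∀ (L' : Type u) (_ : Order.Frame L'),
          IsCompactFrame L' → IsRegularFrame L' →
          ∀ f : FrameHom L' L, Finer (kIncl k) f →
            ∃ g' : FrameHom L' M', f = k'.comp g') →
        ∃ h : FrameHom M M', k = k'.comp h) := by
  constructor
  · intro L' instL' hLc hLr f hf
    have hf' : ∀ {x y : L'}, WellInside y x →
        ∃ a b : M, WellInside b a ∧ f y ≤ k b ∧ k a ≤ f x :=
      fun {x y} h => finer_unfold hdense hsurj hf h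
    refine ⟨gHom k f hMc hMr hdense hLc hLr hf', ?_, ?_⟩
    · exact DFunLike.ext _ _ fun x =>
        (k_gfun hMc hMr hLc hLr hf' x).symm
    · intro g₂ hg₂
      refine lift_unique k hdense hLr g₂ _ fun y => ?_
      have e1 : k (g₂ y) = f y := by rw [hg₂]; rfl
      have e2 : k (gHom k f hMc hMr hdense hLc hLr hf' y) = f y :=
        k_gfun hMc hMr hLc hLr hf' y
      rw [e1, e2]
  · intro M' instM' hM'c hM'r k' hd' hs' hext
    have hfin : Finer (kIncl k) k := by
      intro x y h
      refine ⟨k y, k x, le_rfl, ?_, le_rfl⟩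
      intro r hR _
      exact hR _ _ ⟨x, y, h, rfl, rfl⟩
    obtain ⟨g', hg'⟩ := hext M inferInstance hMc hMr k hfin
    exact ⟨g', hg'⟩
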